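/- In the Weyl-group setting above, if γ ∈ ker(w + w^Δ), then −2·w^Δ(γ) = Σ_{h=1}^m u_h(γ) = −Σ_{h=1}^m ⟨(β^Δ_{j_h})∨, w^Δ(γ)⟩ · β_{j_h}. Consequently γ = (1/2)(w^Δ)^{−1}(Σ_{h=1}^m ⟨(β^Δ_{j_h})∨, w^Δ(γ)⟩ β_{j_h}). -/
import Mathlib


open scoped RealInnerProductSpace

/-- `pref w s ℓ = w₀ s₁ w₁ ⋯ s_ℓ w_ℓ` (composition of endomorphisms). -/
def pref {V : Type*} [NormedAddCommGroup V] [InnerProductSpace ℝ V]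
    (w s : ℕ → Module.End ℝ V) : ℕ → Module.End ℝ V
  | 0 => w 0
  | ℓ + 1 => pref w s ℓ * s (ℓ + 1) * w (ℓ + 1)

/-- `plainPref w ℓ = w₀ w₁ ⋯ w_ℓ`. -/
def plainPref {V : Type*} [NormedAddCommGroup V] [InnerProductSpace ℝ V]
    (w : ℕ → Module.End ℝ V) : ℕ → Module.End ℝ V
  | 0 => w 0
  | ℓ + 1 => plainPref w ℓ * w (ℓ + 1)

/-- `suff w m ℓ = w_ℓ w_{ℓ+1} ⋯ w_m`. -/
def suff {V : Type*} [NormedAddCommGroup V] [InnerProductSpace ℝ V]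
    (w : ℕ → Module.End ℝ V) (m ℓ : ℕ) : Module.End ℝ V :=
  ((List.range (m + 1 - ℓ)).map fun i => w (ℓ + i)).prod

/-- `uop w s m ℓ = w₀ s₁ w₁ ⋯ w_{ℓ-1} (s_ℓ - id) w_ℓ ⋯ w_m`. -/
def uop {V : Type*} [NormedAddCommGroup V] [InnerProductSpace ℝ V]
    (w s : ℕ → Module.End ℝ V) (m ℓ : ℕ) : Module.End ℝ V :=
  pref w s (ℓ - 1) * (s ℓ - 1) * suff w m ℓ

/-- `vop w s m ℓ = w₀ s₁ w₁ ⋯ w_{ℓ-1} (s_ℓ + id) w_ℓ ⋯ w_m`. -/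
def vop {V : Type*} [NormedAddCommGroup V] [InnerProductSpace ℝ V]
    (w s : ℕ → Module.End ℝ V) (m ℓ : ℕ) : Module.End ℝ V :=
  pref w s (ℓ - 1) * (s ℓ + 1) * suff w m ℓ

/-- `β_{j_ℓ} = w₀ s₁ w₁ ⋯ s_{ℓ-1} w_{ℓ-1} (α_{j_ℓ})`. -/
def betaV {V : Type*} [NormedAddCommGroup V] [InnerProductSpace ℝ V]
    (w s : ℕ → Module.End ℝ V) (α : ℕ → V) (ℓ : ℕ) : V :=
  pref w s (ℓ - 1) (α ℓ)

/-- `β^Δ_{j_ℓ} = w₀ w₁ ⋯ w_{ℓ-1} (α_{j_ℓ})`. -/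
def betaD {V : Type*} [NormedAddCommGroup V] [InnerProductSpace ℝ V]
    (w : ℕ → Module.End ℝ V) (α : ℕ → V) (ℓ : ℕ) : V :=
  plainPref w (ℓ - 1) (α ℓ)

/-- `⟨(β^Δ_{j_ℓ})∨, w^Δ(γ)⟩` where `β∨ = (2/⟨β,β⟩)β`. -/
noncomputable def coeffc {V : Type*} [NormedAddCommGroup V] [InnerProductSpace ℝ V]
    (w s : ℕ → Module.End ℝ V) (α : ℕ → V) (m : ℕ) (γ : V) (ℓ : ℕ) : ℝ :=
  (2 / ⟪betaD w α ℓ, betaD w α ℓ⟫) * ⟪betaD w α ℓ, plainPref w m γ⟫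

section Aux
variable {V : Type*} [NormedAddCommGroup V] [InnerProductSpace ℝ V]
  (w s : ℕ → Module.End ℝ V)

lemma suff_step {m ℓ : ℕ} (h : ℓ ≤ m) :
    suff w m ℓ = w ℓ * suff w m (ℓ + 1) := by
  unfold suff
  have h1 : m + 1 - ℓ = (m - ℓ) + 1 := by omega
  have h2 : m + 1 - (ℓ + 1) = m - ℓ := by omega
  rw [h1, h2, List.range_succ_eq_map, List.map_cons, List.prod_cons, List.map_map]
  have h3 : ((fun i => w (ℓ + i)) ∘ Nat.succ) = fun i => w (ℓ + 1 + i) := by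
    funext i
    simp only [Function.comp]
    congr 1
    omega
  rw [h3]
  simp

lemma suff_last (m : ℕ) : suff w m (m + 1) = 1 := by
  unfold suff
  simp

lemma plain_mul_suff (m : ℕ) :
    ∀ k ℓ, ℓ + k = m → plainPref w ℓ * suff w m (ℓ + 1) = plainPref w m := by
  intro k
  induction k with
  | zero =>
    intro ℓ hℓ
    subst hℓ
    simp [suff_last]
  | succ k ih =>
    intro ℓ hℓ
    have h1 : ℓ + 1 ≤ m := by omega
    rw [suff_step w h1, ← mul_assoc]
    have : plainPref w ℓ * w (ℓ + 1) = plainPref w (ℓ + 1) := rfl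
    rw [this]
    exact ih (ℓ + 1) (by omega)

lemma plainPref_inner (hw : ∀ i (x y : V), ⟪w i x, w i y⟫ = ⟪x, y⟫) :
    ∀ ℓ (x y : V), ⟪plainPref w ℓ x, plainPref w ℓ y⟫ = ⟪x, y⟫ := by
  intro ℓ
  induction ℓ with
  | zero => exact hw 0
  | succ ℓ ih =>
    intro x y
    have : ∀ z, plainPref w (ℓ + 1) z = plainPref w ℓ (w (ℓ + 1) z) := fun z => rfl
    rw [this, this, ih, hw]

/-- telescoping identity on the level of endomorphisms -/
lemma uop_sum (m : ℕ) :
    ∑ h ∈ Finset.Icc 1 m, uop w s m h = pref w s m - plainPref w m := by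
  have key : ∀ i < m, uop w s m (i + 1) =
      pref w s (i + 1) * suff w m (i + 2) - pref w s i * suff w m (i + 1) := by
    intro i hi
    have h1 : i + 1 ≤ m := by omega
    have hsuff : suff w m (i + 1) = w (i + 1) * suff w m (i + 2) := suff_step w h1
    unfold uop
    simp only [Nat.add_sub_cancel]
    have hp : pref w s (i + 1) = pref w s i * s (i + 1) * w (i + 1) := rfl
    rw [hp, hsuff]
    noncomm_ring
  have hIcc : ∑ h ∈ Finset.Icc 1 m, uop w s m h =
      ∑ i ∈ Finset.range m, uop w s m (1 + i) := by
    rw [← Finset.Ico_add_one_right_eq_Icc, Finset.sum_Ico_eq_sum_range]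
    simp
  rw [hIcc]
  have step : ∑ i ∈ Finset.range m, uop w s m (1 + i) =
      ∑ i ∈ Finset.range m,
        ((fun j => pref w s j * suff w m (j + 1)) (i + 1) -
         (fun j => pref w s j * suff w m (j + 1)) i) := by
    apply Finset.sum_congr rfl
    intro i hi
    rw [add_comm 1 i]
    exact key i (Finset.mem_range.mp hi)
  rw [step, Finset.sum_range_sub (fun j => pref w s j * suff w m (j + 1)) m]
  show pref w s m * suff w m (m + 1) - pref w s 0 * suff w m (0 + 1) = _
  rw [suff_last]
  have h0 : pref w s 0 * suff w m (0 + 1) = plainPref w m := by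
    have : pref w s 0 = plainPref w 0 := rfl
    rw [this]
    exact plain_mul_suff w m m 0 (by omega)
  rw [h0, mul_one]


end Aux

theorem gamma_recovered_from_coeffs
    {V : Type*} [NormedAddCommGroup V] [InnerProductSpace ℝ V] [FiniteDimensional ℝ V]
    (m : ℕ) (w s : ℕ → Module.End ℝ V) (α : ℕ → V)
    (hα : ∀ ℓ, α ℓ ≠ 0)
    (hw : ∀ i (x y : V), ⟪w i x, w i y⟫ = ⟪x, y⟫)
    (hs : ∀ ℓ (v : V), s ℓ v = v - ((2 * ⟪α ℓ, v⟫) / ⟪α ℓ, α ℓ⟫) • α ℓ)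
    (wΔinv : Module.End ℝ V)
    (hinv : wΔinv * plainPref w m = 1 ∧ plainPref w m * wΔinv = 1)
    (γ : V) (hγ : (pref w s m + plainPref w m) γ = 0) :
    (-(2 : ℝ)) • plainPref w m γ = ∑ h ∈ Finset.Icc 1 m, uop w s m h γ ∧
      (∑ h ∈ Finset.Icc 1 m, uop w s m h γ =
        -∑ h ∈ Finset.Icc 1 m, coeffc w s α m γ h • betaV w s α h) ∧
      γ = (1 / 2 : ℝ) •
        wΔinv (∑ h ∈ Finset.Icc 1 m, coeffc w s α m γ h • betaV w s α h) := by
  have hγ' : pref w s m γ = -(plainPref w m γ) := by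
    rw [LinearMap.add_apply] at hγ
    exact eq_neg_of_add_eq_zero_left hγ
  have claim1 : (-(2 : ℝ)) • plainPref w m γ = ∑ h ∈ Finset.Icc 1 m, uop w s m h γ := by
    have h1 : ∑ h ∈ Finset.Icc 1 m, uop w s m h γ = (pref w s m - plainPref w m) γ := by
      rw [← LinearMap.sum_apply, uop_sum]
    rw [h1, LinearMap.sub_apply, hγ', neg_smul, two_smul, neg_add]
    abel
  have hterm : ∀ h ∈ Finset.Icc 1 m,
      uop w s m h γ = -(coeffc w s α m γ h • betaV w s α h) := by
    intro h hh
    obtain ⟨hh1, hh2⟩ := Finset.mem_Icc.mp hh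
    set v := suff w m h γ with hv
    have happ : uop w s m h γ = pref w s (h - 1) ((s h - 1) v) := by
      unfold uop
      rw [Module.End.mul_apply, Module.End.mul_apply]
    have hsv : (s h - 1) v = -(((2 * ⟪α h, v⟫) / ⟪α h, α h⟫) • α h) := by
      rw [LinearMap.sub_apply, hs h v, Module.End.one_apply]
      abel
    have hcoef : coeffc w s α m γ h = (2 * ⟪α h, v⟫) / ⟪α h, α h⟫ := by
      unfold coeffc betaD
      have e2 : plainPref w (h - 1) * suff w m ((h - 1) + 1) = plainPref w m :=
        plain_mul_suff w m (m - (h - 1)) (h - 1) (by omega)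
      have hh1' : h - 1 + 1 = h := by omega
      rw [hh1'] at e2
      have e3 : plainPref w m γ = plainPref w (h - 1) v := by
        rw [← e2, Module.End.mul_apply]
      rw [e3, plainPref_inner w hw, plainPref_inner w hw]
      ring
    rw [happ, hsv, map_neg, map_smul, hcoef]
    rfl
  have claim2 : ∑ h ∈ Finset.Icc 1 m, uop w s m h γ =
      -∑ h ∈ Finset.Icc 1 m, coeffc w s α m γ h • betaV w s α h := by
    rw [← Finset.sum_neg_distrib]
    exact Finset.sum_congr rfl hterm
  refine ⟨claim1, claim2, ?_⟩
  have hS : plainPref w m γ =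
      (1 / 2 : ℝ) • ∑ h ∈ Finset.Icc 1 m, coeffc w s α m γ h • betaV w s α h := by
    have hstart : plainPref w m γ = (-(1 / 2) : ℝ) • ((-(2) : ℝ) • plainPref w m γ) := by
      rw [smul_smul]
      norm_num
    rw [claim1.trans claim2] at hstart
    simpa [smul_neg, neg_smul, neg_neg] using hstart
  have hγid : γ = wΔinv (plainPref w m γ) := by
    have h1 := congrArg (fun f : Module.End ℝ V => f γ) hinv.1
    simpa [Module.End.mul_apply] using h1.symm
  calc γ = wΔinv (plainPref w m γ) := hγid
    _ = wΔinv ((1 / 2 : ℝ) •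
          ∑ h ∈ Finset.Icc 1 m, coeffc w s α m γ h • betaV w s α h) := congrArg (⇑wΔinv) hS
    _ = (1 / 2 : ℝ) •
          wΔinv (∑ h ∈ Finset.Icc 1 m, coeffc w s α m γ h • betaV w s α h) := map_smul _ _ _
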